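/- If the domain of discourse is a set M (together with a binary relation interpreting membership), then the satisfaction relation for almost self-referential formulas over M is well-defined: for every almost self-referential formula (φ, R, x) and every assignment of the parameter, there is a unique truth value, determined by recursion along the well-founded part R_w of R. -/
import Mathlib


/-! ### First-order formulas of set theory (with optional extra unary predicate symbols `P`) -/

/-- First-order formulas in the language of set theory (`∈`, `=`), with variables indexed by `ℕ`
and extra unary predicate symbols drawn from `P`. -/
inductive Fml (P : Type) : Type where
  | mem : ℕ → ℕ → Fml P
  | eq : ℕ → ℕ → Fml P
  | pr : P → ℕ → Fml P
  | not : Fml P → Fml P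
  | and : Fml P → Fml P → Fml P
  | all : ℕ → Fml P → Fml P

namespace Fml

variable {P : Type}

/-- Tarskian satisfaction for `Fml P` in a structure with universe `M`, relativized to the
class `Dom`, with `E` interpreting `∈` and `I` interpreting the extra unary predicates. -/
def Sat {M : Type*} (Dom : M → Prop) (E : M → M → Prop) (I : P → M → Prop) :
    Fml P → (ℕ → M) → Prop
  | .mem i j, v => E (v i) (v j)
  | .eq i j, v => v i = v j
  | .pr p i, v => I p (v i)
  | .not φ, v => ¬ Sat Dom E I φ v
  | .and φ ψ, v => Sat Dom E I φ v ∧ Sat Dom E I ψ v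
  | .all n φ, v => ∀ a, Dom a → Sat Dom E I φ (Function.update v n a)

def imp (φ ψ : Fml P) : Fml P := .not (.and φ (.not ψ))
def orr (φ ψ : Fml P) : Fml P := .not (.and (.not φ) (.not ψ))
def iffF (φ ψ : Fml P) : Fml P := .and (imp φ ψ) (imp ψ φ)
def ex (n : ℕ) (φ : Fml P) : Fml P := .not (.all n (.not φ))
def ball (n w : ℕ) (φ : Fml P) : Fml P := .all n (imp (.mem n w) φ)
def bex (n w : ℕ) (φ : Fml P) : Fml P := ex n (.and (.mem n w) φ)

/-- Free variables. -/
def free : Fml P → Finset ℕ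
  | .mem i j => {i, j}
  | .eq i j => {i, j}
  | .pr _ i => {i}
  | .not φ => free φ
  | .and φ ψ => free φ ∪ free ψ
  | .all n φ => (free φ).erase n

/-- Bound variables. -/
def bnd : Fml P → Finset ℕ
  | .mem _ _ => ∅
  | .eq _ _ => ∅
  | .pr _ _ => ∅
  | .not φ => bnd φ
  | .and φ ψ => bnd φ ∪ bnd ψ
  | .all n φ => insert n (bnd φ)

/-- Substitution of variable `j` for (free occurrences of) variable `i`. -/
def subst (i j : ℕ) : Fml P → Fml P
  | .mem a b => .mem (if a = i then j else a) (if b = i then j else b)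
  | .eq a b => .eq (if a = i then j else a) (if b = i then j else b)
  | .pr p a => .pr p (if a = i then j else a)
  | .not φ => .not (subst i j φ)
  | .and φ ψ => .and (subst i j φ) (subst i j ψ)
  | .all n φ => if n = i then .all n φ else .all n (subst i j φ)

/-- Universal closure. -/
def closure (φ : Fml P) : Fml P := ((free φ).sort (· ≤ ·)).foldr .all φ

/-! #### Auxiliary defined formulas.
Each helper takes an "offset" `o`; its internally bound variables are `o, o+1, …`;
it is used with `o` larger than all argument variables. -/

def subsetF (a b o : ℕ) : Fml P := .all o (imp (.mem o a) (.mem o b))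

def transF (t o : ℕ) : Fml P :=
  .all o (imp (.mem o t) (.all (o+1) (imp (.mem (o+1) o) (.mem (o+1) t))))

/-- `x` is an ordinal (a transitive set of transitive sets; we assume foundation). -/
def isOrdF (x o : ℕ) : Fml P := .and (transF x o) (.all o (imp (.mem o x) (transF o (o+1))))

/-- `x` is a (nonzero) limit ordinal. -/
def isLimF (x o : ℕ) : Fml P :=
  .and (isOrdF x o) (.and (ex o (.mem o x))
    (.all o (imp (.mem o x) (ex (o+1) (.and (.mem (o+1) x) (.mem o (o+1)))))))

/-- `x` is an infinite ordinal (an ordinal that is, or contains, a limit ordinal). -/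
def isInfOrdF (x o : ℕ) : Fml P :=
  .and (isOrdF x o) (orr (isLimF x o) (bex o x (isLimF o (o+1))))

/-- `p` is the Kuratowski pair `⟨u, v⟩`. -/
def kpairF (p u v o : ℕ) : Fml P :=
  .all o (iffF (.mem o p)
    (orr (.all (o+1) (iffF (.mem (o+1) o) (.eq (o+1) u)))
         (.all (o+1) (iffF (.mem (o+1) o) (orr (.eq (o+1) u) (.eq (o+1) v))))))

/-- `f` is a (total) function from `t` to `a` (coded by Kuratowski pairs). -/
def isFuncF (f t a o : ℕ) : Fml P :=
  .and (.and
    (ball o f (bex (o+1) t (bex (o+2) a (kpairF o (o+1) (o+2) (o+3)))))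
    (ball (o+1) t (bex (o+2) a (bex o f (kpairF o (o+1) (o+2) (o+3))))))
    (ball o f (ball (o+5) f (.all (o+1) (.all (o+2) (.all (o+6)
      (imp (.and (kpairF o (o+1) (o+2) (o+3)) (kpairF (o+5) (o+1) (o+6) (o+3)))
        (.eq (o+6) (o+2))))))))

/-- `f` is an injection of `t` into `a`. -/
def injF (f t a o : ℕ) : Fml P :=
  .and (isFuncF f t a o)
    (ball o f (ball (o+5) f (.all (o+1) (.all (o+2) (.all (o+6)
      (imp (.and (kpairF o (o+1) (o+2) (o+3)) (kpairF (o+5) (o+6) (o+2) (o+3)))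
        (.eq (o+6) (o+1))))))))

/-- `t` is strictly less numerous than `a`. -/
def lessNumF (t a o : ℕ) : Fml P :=
  .and (ex o (injF o t a (o+1))) (.not (ex o (injF o a t (o+1))))

/-- `t` is the transitive closure of `x`: the least transitive set including `x`. -/
def isTransClF (x t o : ℕ) : Fml P :=
  .and (.and (subsetF x t o) (transF t o))
    (.all o (imp (.and (subsetF x o (o+1)) (transF o (o+1)))
      (subsetF t o (o+1))))

/-- `k` is a regular ordinal: no function from a smaller ordinal into `k` is cofinal. -/
def isRegF (k o : ℕ) : Fml P :=
  ball o k (.all (o+1) (imp (isFuncF (o+1) o k (o+10))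
    (bex (o+2) k (ball (o+3) (o+1) (.all (o+4) (.all (o+5)
      (imp (kpairF (o+3) (o+4) (o+5) (o+6)) (.mem (o+5) (o+2)))))))))

/-- `k` is a strong limit: for every `b ∈ k` the power set of `b` injects into some `g ∈ k`. -/
def isStrongLimF (k o : ℕ) : Fml P :=
  ball o k (ex (o+1) (.and
    (.all (o+2) (iffF (.mem (o+2) (o+1)) (subsetF (o+2) o (o+3))))
    (bex (o+4) k (ex (o+5) (injF (o+5) (o+1) (o+4) (o+10))))))

/-- `k` is an uncountable ordinal: `ω ∈ k` (least limit ordinal) and `k` does not inject into `ω`. -/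
def isUncountableF (k o : ℕ) : Fml P :=
  bex o k (.and (.and (isLimF o (o+2)) (ball (o+1) o (.not (isLimF (o+1) (o+2)))))
    (.not (ex (o+1) (injF (o+1) k o (o+10)))))

/-- `k` is an inaccessible cardinal: uncountable, regular and a strong limit. -/
def isInaccF (k o : ℕ) : Fml P :=
  .and (.and (isOrdF k o) (isUncountableF k o))
    (.and (isRegF k o) (isStrongLimF k o))

/-- `c` is a closed unbounded subset of `k`. -/
def isClubF (c k o : ℕ) : Fml P :=
  .and (.and (subsetF c k o) (ball o k (bex (o+1) c (.mem o (o+1)))))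
    (ball o k (imp (.and (isLimF o (o+5))
        (ball (o+1) o (bex (o+2) c (.and (.mem (o+1) (o+2)) (.mem (o+2) o)))))
      (.mem o c)))

/-- `k` is a Mahlo cardinal: inaccessible, and every club in `k` contains a regular
(infinite) ordinal. -/
def isMahloF (k o : ℕ) : Fml P :=
  .and (isInaccF k o)
    (.all o (imp (isClubF o k (o+2))
      (bex (o+1) o (.and (isInfOrdF (o+1) (o+10)) (isRegF (o+1) (o+10))))))

/-! #### The axioms of the set theories considered -/

def extAx : Fml P := .all 0 (.all 1 (imp (.all 2 (iffF (.mem 2 0) (.mem 2 1))) (.eq 0 1)))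
def pairAx : Fml P := .all 0 (.all 1 (ex 2 (.all 3 (iffF (.mem 3 2) (orr (.eq 3 0) (.eq 3 1))))))
def unionAx : Fml P := .all 0 (ex 1 (.all 2 (iffF (.mem 2 1) (bex 3 0 (.mem 2 3)))))
def powAx : Fml P := .all 0 (ex 1 (.all 2 (iffF (.mem 2 1) (subsetF 2 0 3))))
def emptyAx : Fml P := ex 0 (.all 1 (.not (.mem 1 0)))
def infAx : Fml P :=
  ex 0 (.and (bex 1 0 (.all 2 (.not (.mem 2 1))))
    (ball 1 0 (bex 2 0 (.all 3 (iffF (.mem 3 2) (orr (.mem 3 1) (.eq 3 1)))))))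
def foundAx : Fml P :=
  .all 0 (imp (ex 1 (.mem 1 0)) (bex 1 0 (.all 2 (imp (.mem 2 1) (.not (.mem 2 0))))))
def choiceAx : Fml P :=
  .all 0 (imp (.and (ball 1 0 (ex 2 (.mem 2 1)))
      (ball 1 0 (ball 2 0 (imp (.not (.eq 1 2)) (.not (ex 3 (.and (.mem 3 1) (.mem 3 2))))))))
    (ex 4 (ball 1 0 (ex 5 (.and (.and (.mem 5 1) (.mem 5 4))
      (.all 6 (imp (.and (.mem 6 1) (.mem 6 4)) (.eq 6 5))))))))
def tcAx : Fml P := .all 0 (ex 1 (isTransClF 0 1 10))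
/-- For every `a` there is the set of all sets whose transitive closure is less numerous
than `a`. -/
def hAx : Fml P :=
  .all 0 (ex 1 (.all 2 (iffF (.mem 2 1) (ex 3 (.and (isTransClF 2 3 10) (lessNumF 3 0 20))))))

/-- An instance of the separation schema for `φ`. -/
def sepInst (φ : Fml P) (z a b : ℕ) : Fml P :=
  closure (.all a (ex b (.all z (iffF (.mem z b) (.and (.mem z a) φ)))))

def sepScheme : Set (Fml P) :=
  {ψ | ∃ (φ : Fml P) (z a b : ℕ), z ≠ a ∧ z ≠ b ∧ a ≠ b ∧ b ∉ free φ ∧ a ∉ free φ ∧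
    ψ = sepInst φ z a b}

/-- An instance of the replacement schema for `φ` (with distinguished variables `x`, `y`). -/
def repInst (φ : Fml P) (x y y' a b : ℕ) : Fml P :=
  closure (.all a (imp
    (ball x a (ex y (.and φ (.all y' (imp (subst y y' φ) (.eq y' y))))))
    (ex b (ball x a (bex y b φ)))))

def repScheme : Set (Fml P) :=
  {ψ | ∃ (φ : Fml P) (x y y' a b : ℕ), [x, y, y', a, b].Nodup ∧
    y' ∉ free φ ∧ y' ∉ bnd φ ∧ a ∉ free φ ∧ b ∉ free φ ∧
    ψ = repInst φ x y y' a b}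

/-- Δ₀ (bounded-quantifier) formulas. -/
inductive IsDelta0 : Fml P → Prop
  | mem (i j : ℕ) : IsDelta0 (.mem i j)
  | eq (i j : ℕ) : IsDelta0 (.eq i j)
  | pr (p : P) (i : ℕ) : IsDelta0 (.pr p i)
  | not {φ} : IsDelta0 φ → IsDelta0 (.not φ)
  | and {φ ψ} : IsDelta0 φ → IsDelta0 ψ → IsDelta0 (.and φ ψ)
  | ball {φ} (z w : ℕ) : z ≠ w → IsDelta0 φ → IsDelta0 (Fml.ball z w φ)

/-- Σ₁ formulas: blocks of existential quantifiers in front of a Δ₀ formula. -/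
inductive IsSigma1 : Fml P → Prop
  | of_delta0 {φ} : IsDelta0 φ → IsSigma1 φ
  | ex {φ} (n : ℕ) : IsSigma1 φ → IsSigma1 (Fml.ex n φ)

def boundedSepScheme : Set (Fml P) :=
  {ψ | ∃ (φ : Fml P) (z a b : ℕ), IsDelta0 φ ∧ z ≠ a ∧ z ≠ b ∧ a ≠ b ∧ b ∉ free φ ∧
    a ∉ free φ ∧ ψ = sepInst φ z a b}

/-- ZFC minus the power set axiom. -/
def zfcMinusPow : Set (Fml P) :=
  {extAx, pairAx, unionAx, emptyAx, infAx, foundAx, choiceAx} ∪ sepScheme ∪ repScheme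

/-- ZFC.  (Separation and replacement are included for all formulas of the language,
so for `P ≠ ∅` this is ZFC with the schemas extended to the enlarged language.) -/
def zfcAx : Set (Fml P) := insert powAx zfcMinusPow

/-- ZFC minus the axiom of infinity. -/
def zfcMinusInf : Set (Fml P) :=
  {extAx, pairAx, unionAx, powAx, emptyAx, foundAx, choiceAx} ∪ sepScheme ∪ repScheme

/-- Rudimentary set theory: extensionality, foundation, empty set, pairing, union,
existence of transitive closures, existence of the set of all sets with transitive closure
less numerous than a given set, and bounded-quantifier separation. -/
def rudimentary : Set (Fml P) :=
  {extAx, foundAx, emptyAx, pairAx, unionAx, tcAx, hAx} ∪ boundedSepScheme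

/-- `(M, E, I)` (with all of `M` as domain) is a model of the theory `T`. -/
def ModelsTh {M : Type*} (E : M → M → Prop) (I : P → M → Prop) (T : Set (Fml P)) : Prop :=
  ∀ φ ∈ T, ∀ v : ℕ → M, Sat (fun _ => True) E I φ v

/-- Consistency of a theory, rendered semantically (equivalent to syntactic consistency by
the Gödel completeness theorem): the theory has a model. -/
def Con (T : Set (Fml P)) : Prop :=
  ∃ (M : Type) (E : M → M → Prop) (I : P → M → Prop), Nonempty M ∧ ModelsTh E I T

end Fml

namespace Fml

/-- The binary relation on `M` defined by the first-order formula `R`, whose marked argument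
places are the variables `0` and `1`. -/
def relOf {M : Type*} (E : M → M → Prop) (R : Fml Empty) (a b : M) : Prop :=
  Sat (fun _ => True) E (fun p _ => p.elim) R (fun n => if n = 0 then a else b)

/-- The well-founded part of a binary relation: `wfPart r a x` iff `r a x` and there is no
infinite sequence `x, y₁, y₂, …` with `r y₁ x`, `r y₂ y₁`, …. -/
def wfPart {M : Type*} (r : M → M → Prop) (a x : M) : Prop :=
  r a x ∧ ¬ ∃ s : ℕ → M, r (s 0) x ∧ ∀ n, r (s (n + 1)) (s n)

end Fml

open Fml in
private theorem sat_congr_aux {P : Type} {M : Type} (Dom : M → Prop) (E : M → M → Prop)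
    {I I' : P → M → Prop} (h : ∀ p a, I p a ↔ I' p a) :
    ∀ (φ : Fml P) (v : ℕ → M), Sat Dom E I φ v ↔ Sat Dom E I' φ v := by
  intro φ
  induction φ with
  | mem i j => intro v; simp [Sat]
  | eq i j => intro v; simp [Sat]
  | pr p i => intro v; simpa [Sat] using h p (v i)
  | not φ ih => intro v; simp [Sat, ih]
  | and φ ψ ih1 ih2 => intro v; simp [Sat, ih1, ih2]
  | all n φ ih => intro v; simp [Sat, ih]

open Fml in
private theorem wfPart_wellFounded {M : Type} (r : M → M → Prop) :
    WellFounded (wfPart r) := by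
  classical
  constructor
  intro x
  by_contra hx
  have key : ∀ y : M, ¬ Acc (wfPart r) y →
      ∃ z, wfPart r z y ∧ ¬ Acc (wfPart r) z := by
    intro y hy
    by_contra h
    push_neg at h
    exact hy (Acc.intro y fun z hz => h z hz)
  have step : ∀ y : {y : M // ¬ Acc (wfPart r) y},
      ∃ z : {y : M // ¬ Acc (wfPart r) y}, wfPart r z.1 y.1 := by
    rintro ⟨y, hy⟩
    obtain ⟨z, hz, ha⟩ := key y hy
    exact ⟨⟨z, ha⟩, hz⟩
  choose f hf using step
  set s : ℕ → {y : M // ¬ Acc (wfPart r) y} := fun n => f^[n] ⟨x, hx⟩ with hs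
  have hchain : ∀ n, wfPart r (s (n + 1)).1 (s n).1 := by
    intro n
    have : s (n + 1) = f (s n) := by
      simp [hs, Function.iterate_succ_apply']
    rw [this]
    exact hf (s n)
  exact (hchain 0).2 ⟨fun n => (s (n + 1)).1, (hchain 0).1, fun n => (hchain (n + 1)).1⟩

open Fml in
/-- If the domain of discourse is a set `M` with a binary relation `E`
interpreting membership, then the satisfaction relation for almost self-referential formulas
over `M` is well-defined: for every almost self-referential formula `(φ, R, x)` — `φ` the
formula proper (which may use the special unary predicate symbol `f`), `R` the relation,
the parameter being variable `0` — and every assignment `v` of the remaining parameters,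
there is a unique truth-value function `F` (assigning to every value `x` of the parameter
the truth value `F x`), determined by the recursion along the well-founded part of `R`:
`F x` is computed as the value of `φ` at parameter `x`, where `f(a)` evaluates to
`wfPart (relOf E R) a x ∧ F a`. -/
theorem asr_satisfaction_well_defined (M : Type) (E : M → M → Prop)
    (φ : Fml Unit) (R : Fml Empty) (v : ℕ → M) :
    ∃! F : M → Prop, ∀ x : M,
      F x ↔ Sat (fun _ => True) E (fun _ a => wfPart (relOf E R) a x ∧ F a) φ
        (Function.update v 0 x) := by
  classical
  have wf : WellFounded (wfPart (relOf E R)) := wfPart_wellFounded _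
  set C : ∀ x : M, (∀ a, wfPart (relOf E R) a x → Prop) → Prop :=
    fun x ih => Sat (fun _ => True) E
      (fun _ a => ∃ h : wfPart (relOf E R) a x, ih a h) φ (Function.update v 0 x) with hC
  set F : M → Prop := wf.fix C with hFdef
  have hF : ∀ x, F x ↔ Sat (fun _ => True) E
      (fun _ a => wfPart (relOf E R) a x ∧ F a) φ (Function.update v 0 x) := by
    intro x
    rw [show F x = C x (fun a _ => F a) from wf.fix_eq C x]
    exact sat_congr_aux _ _ (fun p a => exists_prop) φ _
  refine ⟨F, hF, ?_⟩
  intro G hG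
  funext x
  refine propext ?_
  induction x using wf.induction with
  | _ x IH =>
    rw [hG x, hF x]
    exact sat_congr_aux _ _
      (fun p a => and_congr_right fun h => IH a h) φ _
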